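/- For every real number λ > 0, the improper integral ∫₀^∞ t^(−3/2)·(1 − exp(−t·λ²)) dt converges and equals 2·√π·λ. In particular, λ = c₁·∫₀^∞ t^(−3/2)·(1 − exp(−t·λ²)) dt with the constant c₁ = 1/(2√π). -/

import Mathlib

set_option maxHeartbeats 1000000

open MeasureTheory Real Set Filter in
private lemma aux_integrable (lam : ℝ) (hlam : 0 < lam) :
    IntegrableOn (fun t : ℝ => t ^ (-(3:ℝ)/2) * (1 - Real.exp (-(t * lam^2))))
      (Set.Ioi 0) := by
  have hcont : ContinuousOn
      (fun t : ℝ => t ^ (-(3:ℝ)/2) * (1 - Real.exp (-(t * lam^2)))) (Ioi 0) := fun t ht =>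
    ((Real.continuousAt_rpow_const t _ (Or.inl (ne_of_gt ht))).mul
      (by fun_prop)).continuousWithinAt
  have hmeas : AEStronglyMeasurable
      (fun t : ℝ => t ^ (-(3:ℝ)/2) * (1 - Real.exp (-(t * lam^2))))
      (volume.restrict (Ioi 0)) :=
    hcont.aestronglyMeasurable measurableSet_Ioi
  have h1 : IntegrableOn
      (fun t : ℝ => t ^ (-(3:ℝ)/2) * (1 - Real.exp (-(t * lam^2)))) (Ioc 0 1) := by
    have hb : IntegrableOn (fun t : ℝ => lam ^ 2 * t ^ (-(1:ℝ)/2)) (Ioc 0 1) := by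
      apply Integrable.const_mul
      have := (intervalIntegral.intervalIntegrable_rpow' (a := 0) (b := 1)
        (r := -(1:ℝ)/2) (by norm_num)).1
      have h' : IntegrableOn (fun x : ℝ => x ^ (-(1:ℝ)/2)) (Ioc 0 1) := by
        simpa [Set.uIoc_of_le (zero_le_one (α := ℝ))] using this
      exact h'
    refine hb.mono' (hmeas.mono_set Ioc_subset_Ioi_self) ?_
    filter_upwards [ae_restrict_mem measurableSet_Ioc] with t ht
    have ht0 : 0 < t := ht.1
    have he1 : Real.exp (-(t * lam^2)) ≤ 1 := by
      rw [Real.exp_le_one_iff]; nlinarith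
    have he2 : 1 - Real.exp (-(t * lam^2)) ≤ t * lam^2 := by
      have := Real.add_one_le_exp (-(t * lam^2)); linarith
    have hpow : (0:ℝ) < t ^ (-(3:ℝ)/2) := Real.rpow_pos_of_pos ht0 _
    rw [Real.norm_eq_abs, abs_of_nonneg (by nlinarith)]
    calc t ^ (-(3:ℝ)/2) * (1 - Real.exp (-(t * lam^2)))
        ≤ t ^ (-(3:ℝ)/2) * (t * lam^2) := by nlinarith
      _ = lam ^ 2 * (t ^ (-(3:ℝ)/2) * t ^ (1:ℝ)) := by rw [Real.rpow_one]; ring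
      _ = lam ^ 2 * t ^ (-(1:ℝ)/2) := by
          rw [← Real.rpow_add ht0]; norm_num
  have h2 : IntegrableOn
      (fun t : ℝ => t ^ (-(3:ℝ)/2) * (1 - Real.exp (-(t * lam^2)))) (Ioi 1) := by
    have hb : IntegrableOn (fun t : ℝ => t ^ (-(3:ℝ)/2)) (Ioi 1) :=
      integrableOn_Ioi_rpow_of_lt (by norm_num) one_pos
    refine hb.mono' (hmeas.mono_set (Ioi_subset_Ioi zero_le_one)) ?_
    filter_upwards [ae_restrict_mem measurableSet_Ioi] with t ht
    have ht0 : (0:ℝ) < t := lt_trans one_pos ht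
    have he1 : Real.exp (-(t * lam^2)) ≤ 1 := by
      rw [Real.exp_le_one_iff]; nlinarith
    have he0 : 0 < Real.exp (-(t * lam^2)) := Real.exp_pos _
    have hpow : (0:ℝ) < t ^ (-(3:ℝ)/2) := Real.rpow_pos_of_pos ht0 _
    rw [Real.norm_eq_abs, abs_of_nonneg (by nlinarith)]
    nlinarith
  have := h1.union h2
  rwa [Set.Ioc_union_Ioi_eq_Ioi zero_le_one] at this

open MeasureTheory Real Set Filter in
private lemma aux_value (lam : ℝ) (hlam : 0 < lam) :
    (∫ t in Set.Ioi (0:ℝ), t ^ (-(3:ℝ)/2) * (1 - Real.exp (-(t * lam^2))))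
      = 2 * Real.sqrt Real.pi * lam := by
  have hμ : (0:ℝ) < lam ^ 2 := by positivity
  -- integrability of the auxiliary function t^(-1/2) exp(-(lam^2 t))
  have hHint : IntegrableOn (fun t : ℝ => t ^ (-(1:ℝ)/2) * Real.exp (-(lam^2 * t)))
      (Set.Ioi 0) := by
    have := integrableOn_rpow_mul_exp_neg_mul_rpow (p := 1) (s := -(1:ℝ)/2)
      (b := lam^2) (by norm_num) one_pos hμ
    simpa [Real.rpow_one, neg_mul] using this
  -- its value
  have hHval : (∫ t in Set.Ioi (0:ℝ), t ^ (-(1:ℝ)/2) * Real.exp (-(lam^2 * t)))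
      = Real.sqrt Real.pi / lam := by
    have h := Real.integral_rpow_mul_exp_neg_mul_Ioi (a := (1:ℝ)/2) (r := lam^2)
      (by norm_num) hμ
    have he : ((1:ℝ)/2 - 1) = -(1:ℝ)/2 := by norm_num
    rw [he] at h
    have hpow : ((1:ℝ)/lam^2) ^ ((1:ℝ)/2) = 1/lam := by
      rw [show ((1:ℝ)/2) = 1/(2:ℝ) by norm_num, ← Real.sqrt_eq_rpow, one_div, one_div,
        Real.sqrt_inv, Real.sqrt_sq hlam.le]
    rw [h, hpow, Real.Gamma_one_half_eq]
    ring
  -- the antiderivative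
  set f : ℝ → ℝ := fun t => -2 * t ^ (-(1:ℝ)/2) * (1 - Real.exp (-(t * lam^2))) with hfdef
  have hf0 : f 0 = 0 := by simp [hfdef]
  have hderiv : ∀ t ∈ Set.Ioi (0:ℝ), HasDerivAt f
      (t ^ (-(3:ℝ)/2) * (1 - Real.exp (-(t * lam^2)))
        - 2 * lam^2 * (t ^ (-(1:ℝ)/2) * Real.exp (-(lam^2 * t)))) t := by
    intro t ht
    have ht0 : (0:ℝ) < t := ht
    have hA : HasDerivAt (fun x : ℝ => -2 * x ^ (-(1:ℝ)/2))
        (-2 * ((-(1:ℝ)/2) * t ^ ((-(1:ℝ)/2) - 1))) t :=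
      (Real.hasDerivAt_rpow_const (Or.inl ht0.ne')).const_mul (-2)
    have hB : HasDerivAt (fun x : ℝ => 1 - Real.exp (-(x * lam^2)))
        (lam^2 * Real.exp (-(t * lam^2))) t := by
      have h1 : HasDerivAt (fun x : ℝ => -(x * lam^2)) (-lam^2) t := by
        simpa using ((hasDerivAt_id t).mul_const (lam^2)).fun_neg
      have h2 := h1.exp
      have := (hasDerivAt_const t (1:ℝ)).fun_sub h2
      simpa [mul_comm] using this
    have := hA.fun_mul hB
    refine this.congr_deriv ?_
    have he : ((-(1:ℝ)/2) - 1) = -(3:ℝ)/2 := by norm_num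
    rw [he, mul_comm (lam^2) t]
    ring
  have hcont0 : ContinuousWithinAt f (Set.Ici (0:ℝ)) 0 := by
    show Tendsto f (nhdsWithin 0 (Set.Ici (0:ℝ))) (nhds (f 0))
    rw [hf0]
    have hbd : ∀ᶠ t in nhdsWithin 0 (Set.Ici (0:ℝ)),
        ‖f t‖ ≤ 2 * lam^2 * t ^ ((1:ℝ)/2) := by
      filter_upwards [self_mem_nhdsWithin] with t (ht : (0:ℝ) ≤ t)
      rcases eq_or_lt_of_le ht with h | ht0
      · simp [hfdef, ← h]
      · have he1 : Real.exp (-(t * lam^2)) ≤ 1 := by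
          rw [Real.exp_le_one_iff]; nlinarith
        have he2 : 1 - Real.exp (-(t * lam^2)) ≤ t * lam^2 := by
          have := Real.add_one_le_exp (-(t * lam^2)); linarith
        have hpow : (0:ℝ) < t ^ (-(1:ℝ)/2) := Real.rpow_pos_of_pos ht0 _
        have key : t ^ (-(1:ℝ)/2) * t = t ^ ((1:ℝ)/2) := by
          nth_rewrite 2 [← Real.rpow_one t]
          rw [← Real.rpow_add ht0]; norm_num
        rw [hfdef]
        simp only [Real.norm_eq_abs]
        rw [abs_of_nonpos (by nlinarith), neg_mul, neg_mul, neg_neg]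
        calc 2 * t ^ (-(1:ℝ)/2) * (1 - Real.exp (-(t * lam^2)))
            ≤ 2 * t ^ (-(1:ℝ)/2) * (t * lam^2) := by nlinarith
          _ = 2 * lam^2 * (t ^ (-(1:ℝ)/2) * t) := by ring
          _ = 2 * lam^2 * t ^ ((1:ℝ)/2) := by rw [key]
    refine squeeze_zero_norm' hbd ?_
    have : Tendsto (fun t : ℝ => 2 * lam^2 * t ^ ((1:ℝ)/2)) (nhds 0) (nhds 0) := by
      have hc : ContinuousAt (fun t : ℝ => t ^ ((1:ℝ)/2)) 0 :=
        Real.continuousAt_rpow_const 0 _ (Or.inr (by norm_num))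
      have := hc.tendsto
      rw [Real.zero_rpow (by norm_num : ((1:ℝ)/2) ≠ 0)] at this
      simpa using (this.const_mul (2 * lam^2))
    exact this.mono_left nhdsWithin_le_nhds
  have htop : Tendsto f atTop (nhds 0) := by
    have t1 : Tendsto (fun t : ℝ => t ^ (-(1:ℝ)/2)) atTop (nhds 0) := by
      rw [show (-(1:ℝ)/2) = -((1:ℝ)/2) by norm_num]
      exact tendsto_rpow_neg_atTop (by norm_num)
    have t2 : Tendsto (fun t : ℝ => 1 - Real.exp (-(t * lam^2))) atTop (nhds 1) := by
      have h3 : Tendsto (fun t : ℝ => -(t * lam^2)) atTop atBot :=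
        tendsto_neg_atTop_atBot.comp (tendsto_id.atTop_mul_const hμ)
      have := Real.tendsto_exp_atBot.comp h3
      simpa using (tendsto_const_nhds (x := (1:ℝ))).sub this
    have := ((t1.const_mul (-2)).mul t2)
    simpa [hfdef, mul_assoc] using this
  have f'int : IntegrableOn (fun t : ℝ =>
      t ^ (-(3:ℝ)/2) * (1 - Real.exp (-(t * lam^2)))
        - 2 * lam^2 * (t ^ (-(1:ℝ)/2) * Real.exp (-(lam^2 * t)))) (Set.Ioi 0) :=
    (aux_integrable lam hlam).sub (hHint.const_mul (2 * lam^2))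
  have key := integral_Ioi_of_hasDerivAt_of_tendsto hcont0 hderiv f'int htop
  rw [hf0, sub_zero] at key
  rw [integral_sub (aux_integrable lam hlam) (hHint.const_mul (2 * lam^2)),
    MeasureTheory.integral_const_mul, hHval] at key
  have hs : Real.sqrt Real.pi / lam * lam = Real.sqrt Real.pi := by
    field_simp
  have : (∫ t in Set.Ioi (0:ℝ), t ^ (-(3:ℝ)/2) * (1 - Real.exp (-(t * lam^2))))
      = 2 * lam^2 * (Real.sqrt Real.pi / lam) := by linarith
  rw [this]
  field_simp

open MeasureTheory

/-- Subordination formula: for `λ > 0`,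
    `∫₀^∞ t^(-3/2)·(1 - exp(-t·λ²)) dt = 2·√π·λ`, the integral being convergent;
    in particular `λ = (1/(2√π)) · ∫₀^∞ t^(-3/2)·(1 - exp(-t·λ²)) dt`. -/
theorem stmt_2 (lam : ℝ) (hlam : 0 < lam) :
    IntegrableOn (fun t : ℝ => t ^ (-(3:ℝ)/2) * (1 - Real.exp (-(t * lam^2))))
      (Set.Ioi 0) ∧
    (∫ t in Set.Ioi (0:ℝ), t ^ (-(3:ℝ)/2) * (1 - Real.exp (-(t * lam^2))))
      = 2 * Real.sqrt Real.pi * lam ∧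
    lam = (1 / (2 * Real.sqrt Real.pi)) *
      ∫ t in Set.Ioi (0:ℝ), t ^ (-(3:ℝ)/2) * (1 - Real.exp (-(t * lam^2))) := by
  refine ⟨aux_integrable lam hlam, aux_value lam hlam, ?_⟩
  rw [aux_value lam hlam]
  have hπ : Real.sqrt Real.pi ≠ 0 := (Real.sqrt_pos.mpr Real.pi_pos).ne'
  field_simp
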